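/- The intersection of Py^{n+1} = {x ∈ [0,1]^{n+1} : x_j ≤ x_{n+1} ∀j} with the standard simplex S_n equals the set D_n[n+1] = {x ∈ S_n : x_j ≤ x_{n+1} for all j}, and this set equals the convex hull of the points p_J = (1/|J|) e_J over all subsets J ⊆ {1,...,n+1} containing n+1. -/

import Mathlib

open Finset

lemma const_case (n : ℕ) (x : Fin (n+1) → ℝ) (hsum : ∑ j, x j = 1)
    (hall : ∀ j, x j = x (Fin.last n)) :
    x ∈ {p : Fin (n + 1) → ℝ | ∃ J : Finset (Fin (n + 1)), Fin.last n ∈ J ∧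
        p = fun j => if j ∈ J then ((J.card : ℝ))⁻¹ else 0} := by
  refine ⟨Finset.univ, Finset.mem_univ _, ?_⟩
  have hc : (Finset.univ : Finset (Fin (n+1))).card = n + 1 := by simp
  have hn : ((n:ℝ)+1) ≠ 0 := by positivity
  have hm : ((n:ℝ)+1) * x (Fin.last n) = 1 := by
    have : ∑ j, x j = ((n:ℝ)+1) * x (Fin.last n) := by
      rw [Finset.sum_congr rfl (fun j _ => hall j), Finset.sum_const, hc,
        nsmul_eq_mul]
      push_cast
      ring
    linarith [this.symm.trans hsum]
  have hx : x (Fin.last n) = ((n:ℝ)+1)⁻¹ := by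
    field_simp
    linarith
  funext j
  simp only [Finset.mem_univ, if_true, hc, hall j, hx]
  push_cast
  ring

lemma hull_aux (n : ℕ) (k : ℕ) : ∀ x : Fin (n+1) → ℝ,
    (∀ j, 0 ≤ x j) → (∑ j, x j = 1) → (∀ j, x j ≤ x (Fin.last n)) →
    (Finset.univ.filter (fun j => x j ≠ x (Fin.last n))).card ≤ k →
    x ∈ convexHull ℝ {p : Fin (n + 1) → ℝ | ∃ J : Finset (Fin (n + 1)), Fin.last n ∈ J ∧
        p = fun j => if j ∈ J then ((J.card : ℝ))⁻¹ else 0} := by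
  induction k with
  | zero =>
    intro x hpos hsum hle hcard
    apply subset_convexHull
    apply const_case n x hsum
    intro j
    by_contra h
    have : j ∈ Finset.univ.filter (fun j => x j ≠ x (Fin.last n)) := by
      simp [h]
    have := Finset.card_pos.mpr ⟨j, this⟩
    omega
  | succ k ih =>
    intro x hpos hsum hle hcard
    set m := x (Fin.last n) with hm
    set S := Finset.univ.filter (fun j => x j ≠ x (Fin.last n)) with hS
    by_cases hSe : S = ∅
    · apply subset_convexHull
      apply const_case n x hsum
      intro j
      by_contra h
      have : j ∈ S := by simp [hS, h]
      simp [hSe] at this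
    · have hSne : S.Nonempty := Finset.nonempty_of_ne_empty hSe
      set J := Finset.univ.filter (fun j => x j = x (Fin.last n)) with hJ
      have hlastJ : Fin.last n ∈ J := by simp [hJ]
      have hJne : J.Nonempty := ⟨_, hlastJ⟩
      have hJcard : 0 < (J.card : ℝ) := by exact_mod_cast Finset.card_pos.mpr hJne
      obtain ⟨j0, hj0S, hj0⟩ := Finset.exists_mem_eq_sup' hSne x
      set s := S.sup' hSne x with hs
      have hs_le : ∀ j ∈ S, x j ≤ s := fun j hj => Finset.le_sup' x hj
      have hsm : s < m := by
        rw [hj0]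
        rcases lt_or_eq_of_le (hle j0) with h | h
        · exact h
        · exfalso; simp [hS, h] at hj0S; exact hj0S hm
      have hs_nonneg : 0 ≤ s := hj0 ▸ hpos j0
      -- sum splits
      have hsplit : ∑ j ∈ J, x j + ∑ j ∈ S, x j = 1 := by
        rw [← hsum, hJ, hS]
        exact Finset.sum_filter_add_sum_filter_not _ _ _
      have hsumJ : ∑ j ∈ J, x j = (J.card : ℝ) * m := by
        rw [Finset.sum_congr rfl (fun j hj => by simp [hJ] at hj; rw [hj]),
          Finset.sum_const, nsmul_eq_mul]
      set c : ℝ := (J.card : ℝ) * (m - s) with hc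
      have hc_pos : 0 < c := by
        apply mul_pos hJcard; linarith
      have h1c : 1 - c = (J.card : ℝ) * s + ∑ j ∈ S, x j := by
        rw [hc]; rw [hsumJ] at hsplit; ring_nf; linarith
      by_cases hs0 : s = 0
      · -- then all of S is zero, x = p_J
        have hSz : ∀ j ∈ S, x j = 0 := fun j hj => le_antisymm (hs0 ▸ hs_le j hj) (hpos j)
        apply subset_convexHull
        refine ⟨J, hlastJ, ?_⟩
        have hsum0 : ∑ j ∈ S, x j = 0 := Finset.sum_eq_zero hSz
        have hmJ : (J.card : ℝ) * m = 1 := by rw [hsumJ] at hsplit; linarith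
        funext j
        by_cases hjJ : j ∈ J
        · simp only [hjJ, if_true]
          have : x j = m := by simp [hJ] at hjJ; exact hjJ
          rw [this]
          field_simp
          linarith
        · simp only [hjJ, if_false]
          apply hSz
          simp [hS, hJ] at hjJ ⊢
          exact hjJ
      · -- s > 0, recursive step
        have hs_pos : 0 < s := lt_of_le_of_ne hs_nonneg (Ne.symm hs0)
        have hsumS_pos : 0 < ∑ j ∈ S, x j := by
          have := Finset.single_le_sum (f := x) (fun j hj => hpos j) hj0S
          linarith [hj0 ▸ this]
        have h1c_pos : 0 < 1 - c := by
          rw [h1c]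
          have : 0 ≤ (J.card : ℝ) * s := by positivity
          linarith
        set y : Fin (n+1) → ℝ := fun j => if j ∈ J then s / (1 - c) else x j / (1 - c) with hy
        have hy_last : y (Fin.last n) = s / (1 - c) := by simp [hy, hlastJ]
        have hmemS : ∀ j, j ∉ J → j ∈ S := by
          intro j hj
          simp [hJ] at hj
          simp [hS, hj]
        have hy_pos : ∀ j, 0 ≤ y j := by
          intro j
          by_cases hjJ : j ∈ J <;> simp only [hy, hjJ, if_true, if_false]
          · positivity
          · exact div_nonneg (hpos j) h1c_pos.le
        have hy_le : ∀ j, y j ≤ y (Fin.last n) := by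
          intro j
          rw [hy_last]
          by_cases hjJ : j ∈ J
          · simp [hy, hjJ]
          · simp only [hy, hjJ, if_false]
            gcongr
            exact hs_le j (hmemS j hjJ)
        have hy_sum : ∑ j, y j = 1 := by
          have h1 : ∑ j ∈ J, y j = (J.card : ℝ) * s / (1-c) := by
            rw [Finset.sum_congr rfl (fun j (hj : j ∈ J) => show y j = s / (1-c) by
              simp [hy, hj]), Finset.sum_const, nsmul_eq_mul, mul_div_assoc]
          have h2 : ∑ j ∈ S, y j = (∑ j ∈ S, x j) / (1-c) := by
            rw [Finset.sum_div]
            refine Finset.sum_congr rfl (fun j hj => ?_)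
            have hjJ : j ∉ J := by
              simp only [hS, hJ, Finset.mem_filter, Finset.mem_univ, true_and,
                ne_eq] at hj ⊢
              exact hj
            simp [hy, hjJ]
          have h3 : ∑ j, y j = ∑ j ∈ J, y j + ∑ j ∈ S, y j := by
            rw [hJ, hS]
            rw [← Finset.sum_filter_add_sum_filter_not Finset.univ
              (fun j => x j = x (Fin.last n)) y]
          rw [h3, h1, h2, ← add_div]
          rw [div_eq_one_iff_eq h1c_pos.ne']
          linarith
        have hy_card : (Finset.univ.filter (fun j => y j ≠ y (Fin.last n))).card ≤ k := by
          have hsub : Finset.univ.filter (fun j => y j ≠ y (Fin.last n)) ⊆ S.erase j0 := by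
            intro j hj
            simp only [Finset.mem_filter, Finset.mem_univ, true_and] at hj
            have hjJ : j ∉ J := by
              intro hjJ
              apply hj
              rw [hy_last]
              simp [hy, hjJ]
            refine Finset.mem_erase.mpr ⟨?_, hmemS j hjJ⟩
            intro hjj0
            apply hj
            rw [hy_last]
            simp only [hy, hjJ, if_false]
            rw [hjj0, ← hj0]
          calc (Finset.univ.filter (fun j => y j ≠ y (Fin.last n))).card
              ≤ (S.erase j0).card := Finset.card_le_card hsub
            _ = S.card - 1 := Finset.card_erase_of_mem hj0S
            _ ≤ k := by omega
        have hy_hull := ih y hy_pos hy_sum hy_le hy_card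
        have hpJ_hull : (fun j => if j ∈ J then ((J.card : ℝ))⁻¹ else 0) ∈
            convexHull ℝ {p : Fin (n + 1) → ℝ | ∃ J : Finset (Fin (n + 1)), Fin.last n ∈ J ∧
              p = fun j => if j ∈ J then ((J.card : ℝ))⁻¹ else 0} :=
          subset_convexHull _ _ ⟨J, hlastJ, rfl⟩
        have hdecomp : x = c • (fun j => if j ∈ J then ((J.card : ℝ))⁻¹ else 0) + (1 - c) • y := by
          funext j
          simp only [Pi.add_apply, Pi.smul_apply, smul_eq_mul]
          by_cases hjJ : j ∈ J
          · simp only [hy, hjJ, if_true]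
            have hxj : x j = m := by simp [hJ] at hjJ; exact hjJ
            rw [hxj, hc]
            field_simp
            rw [mul_div_assoc, div_self (by rw [← hc]; exact h1c_pos.ne')]; ring
          · simp only [hy, hjJ, if_false]
            field_simp
            ring
        rw [hdecomp]
        exact (convex_convexHull ℝ _) hpJ_hull hy_hull hc_pos.le h1c_pos.le (by ring)

theorem pyramid_simplex_intersection (n : ℕ) :
    ({x : Fin (n + 1) → ℝ | (∀ j, x j ∈ Set.Icc (0:ℝ) 1) ∧ ∀ j, x j ≤ x (Fin.last n)} ∩
        {x : Fin (n + 1) → ℝ | (∀ j, 0 ≤ x j) ∧ ∑ j, x j = 1}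
      = {x : Fin (n + 1) → ℝ |
          ((∀ j, 0 ≤ x j) ∧ ∑ j, x j = 1) ∧ ∀ j, x j ≤ x (Fin.last n)}) ∧
    ({x : Fin (n + 1) → ℝ |
        ((∀ j, 0 ≤ x j) ∧ ∑ j, x j = 1) ∧ ∀ j, x j ≤ x (Fin.last n)}
      = convexHull ℝ
          {p : Fin (n + 1) → ℝ | ∃ J : Finset (Fin (n + 1)), Fin.last n ∈ J ∧
            p = fun j => if j ∈ J then ((J.card : ℝ))⁻¹ else 0}) := by
  constructor
  · ext x
    simp only [Set.mem_inter_iff, Set.mem_setOf_eq, Set.mem_Icc]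
    constructor
    · rintro ⟨⟨_, hle⟩, hpos, hsum⟩
      exact ⟨⟨hpos, hsum⟩, hle⟩
    · rintro ⟨⟨hpos, hsum⟩, hle⟩
      refine ⟨⟨fun j => ⟨hpos j, ?_⟩, hle⟩, hpos, hsum⟩
      calc x j ≤ ∑ i, x i :=
            Finset.single_le_sum (fun i _ => hpos i) (Finset.mem_univ j)
        _ = 1 := hsum
  · apply Set.Subset.antisymm
    · rintro x ⟨⟨hpos, hsum⟩, hle⟩
      exact hull_aux n _ x hpos hsum hle le_rfl
    · apply convexHull_min
      · rintro p ⟨J, hJ, rfl⟩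
        have hJne : J.Nonempty := ⟨_, hJ⟩
        have hJcard : 0 < (J.card : ℝ) := by exact_mod_cast Finset.card_pos.mpr hJne
        refine ⟨⟨fun j => ?_, ?_⟩, fun j => ?_⟩
        · dsimp only
          by_cases hj : j ∈ J
          · simp only [hj, if_true]
            positivity
          · simp [hj]
        · dsimp only
          rw [Finset.sum_ite_mem, Finset.univ_inter, Finset.sum_const, nsmul_eq_mul]
          field_simp
        · dsimp only
          simp only [hJ, if_true]
          by_cases hj : j ∈ J
          · simp [hj]
          · simp only [hj, if_false]
            positivity
      · rintro x ⟨⟨hxpos, hxsum⟩, hxle⟩ y ⟨⟨hypos, hysum⟩, hyle⟩ a b ha hb hab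
        refine ⟨⟨fun j => ?_, ?_⟩, fun j => ?_⟩
        · simp only [Pi.add_apply, Pi.smul_apply, smul_eq_mul]
          exact add_nonneg (mul_nonneg ha (hxpos j)) (mul_nonneg hb (hypos j))
        · simp only [Pi.add_apply, Pi.smul_apply, smul_eq_mul]
          rw [Finset.sum_add_distrib, ← Finset.mul_sum, ← Finset.mul_sum, hxsum, hysum]
          linarith
        · simp only [Pi.add_apply, Pi.smul_apply, smul_eq_mul]
          exact add_le_add (mul_le_mul_of_nonneg_left (hxle j) ha)
            (mul_le_mul_of_nonneg_left (hyle j) hb)
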